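/- If C is a Dedekind-finite set, then for any sets A and B, a bijection between the disjoint union A + C and the disjoint union B + C yields a bijection between A and B. -/
import Mathlib

universe u v w

theorem aux_cancel_finite (A : Type u) (B : Type v) (C : Type w) [Finite C]
    (e : A ⊕ C ≃ B ⊕ C) : Nonempty (A ≃ B) := by
  have h : Cardinal.lift.{max v w} (Cardinal.mk (A ⊕ C))
      = Cardinal.lift.{max u w} (Cardinal.mk (B ⊕ C)) :=
    Cardinal.lift_mk_eq'.mpr ⟨e⟩
  simp only [Cardinal.mk_sum, Cardinal.lift_add, Cardinal.lift_lift] at h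
  have hC' : Cardinal.lift.{max u v w, w} (Cardinal.mk C) < Cardinal.aleph0 :=
    Cardinal.lift_lt_aleph0.mpr (Cardinal.lt_aleph0_of_finite C)
  have h2 := Cardinal.eq_of_add_eq_add_right h hC'
  exact Cardinal.lift_mk_eq.{u, v, w}.mp h2

theorem dedekind_finite_cancel (A B C : Type*)
    (hC : ¬ ∃ f : C → C, Function.Injective f ∧ ¬ Function.Surjective f) :
    Nonempty (A ⊕ C ≃ B ⊕ C) → Nonempty (A ≃ B) := by
  intro ⟨e⟩
  have hfin : Finite C := by
    by_contra h
    haveI : Infinite C := not_finite_iff_infinite.mp h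
    let g := Infinite.natEmbedding C
    refine hC ⟨Function.extend g (g ∘ Nat.succ) id, ?_, ?_⟩
    · intro x y hxy
      rcases em (∃ n, g n = x) with ⟨n, rfl⟩ | hx <;>
        rcases em (∃ m, g m = y) with ⟨m, rfl⟩ | hy
      · rw [g.injective.extend_apply, g.injective.extend_apply] at hxy
        exact congrArg g (Nat.succ_injective (g.injective hxy))
      · rw [g.injective.extend_apply, Function.extend_apply' _ _ _ hy] at hxy
        exact absurd ⟨n + 1, hxy⟩ hy
      · rw [g.injective.extend_apply, Function.extend_apply' _ _ _ hx] at hxy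
        exact absurd ⟨m + 1, hxy.symm⟩ hx
      · rwa [Function.extend_apply' _ _ _ hx, Function.extend_apply' _ _ _ hy] at hxy
    · intro hs
      obtain ⟨c, hc⟩ := hs (g 0)
      rcases em (∃ n, g n = c) with ⟨n, rfl⟩ | hx
      · rw [g.injective.extend_apply] at hc
        exact Nat.succ_ne_zero n (g.injective hc)
      · rw [Function.extend_apply' _ _ _ hx] at hc
        exact hx ⟨0, hc.symm⟩
  exact aux_cancel_finite A B C e
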